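/- Let m ≥ 2 and N = 2L be even with L ≥ 1, and let n : Fin m → ℕ with ∑_j n j = N. Suppose exactly two indices j₁ ≠ j₂ have n j₁ and n j₂ odd (all other n j are even). Let c j = n j / 2 (integer division), so ∑_j c j = L − 1. Then 2 · γ(D_N, n) = γ(C_N, n) + P(c), where γ(C_N, n) and γ(D_N, n) are the numbers of cyclic and dihedral necklaces with multiplicities n and P(c) = (L−1)! / ∏_j (c j)!. -/

import Mathlib

section Involution
variable {X : Type*} [Fintype X] (ι : X → X) (hι : Function.Involutive ι)

/-- The setoid pairing `a` with `ι a`. -/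
def pairSetoid : Setoid X where
  r a b := a = b ∨ ι a = b
  iseqv := by
    refine ⟨fun a => Or.inl rfl, ?_, ?_⟩
    · rintro a b (rfl | rfl)
      · exact Or.inl rfl
      · exact Or.inr (hι a)
    · rintro a b c (rfl | rfl) (rfl | h)
      · exact Or.inl rfl
      · exact Or.inr h
      · exact Or.inr rfl
      · exact Or.inl ((hι a).symm.trans h)

theorem two_mul_card_pairQuotient :
    2 * Nat.card (Quotient (pairSetoid ι hι)) = Nat.card X + Nat.card {x : X // ι x = x} := by
  classical
  letI s := pairSetoid ι hι
  letI : Fintype (Quotient s) := Fintype.ofFinite _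
  have h1 : Nat.card X = ∑ q : Quotient s, Nat.card {x : X // Quotient.mk s x = q} := by
    rw [Nat.card_congr (Equiv.sigmaFiberEquiv (fun x : X => Quotient.mk s x)).symm]
    rw [Nat.card_eq_fintype_card, Fintype.card_sigma]
    simp [Nat.card_eq_fintype_card]
  have h2 : Nat.card {x : X // ι x = x}
      = ∑ q : Quotient s, Nat.card {p : {x : X // ι x = x} // Quotient.mk s p.1 = q} := by
    rw [Nat.card_congr (Equiv.sigmaFiberEquiv (fun p : {x : X // ι x = x} => Quotient.mk s p.1)).symm]
    rw [Nat.card_eq_fintype_card, Fintype.card_sigma]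
    simp [Nat.card_eq_fintype_card]
  have key : ∀ q : Quotient s, Nat.card {x : X // Quotient.mk s x = q}
      + Nat.card {p : {x : X // ι x = x} // Quotient.mk s p.1 = q} = 2 := by
    refine Quotient.ind ?_
    intro a
    have hmk : ∀ x : X, Quotient.mk s x = Quotient.mk s a ↔ (x = a ∨ x = ι a) := by
      intro x
      rw [Quotient.eq]
      constructor
      · rintro (rfl | rfl)
        · exact Or.inl rfl
        · exact Or.inr (hι x).symm
      · rintro (rfl | rfl)
        · exact Or.inl rfl
        · exact Or.inr (hι a)
    by_cases ha : ι a = a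
    · have e1 : Nat.card {x : X // Quotient.mk s x = Quotient.mk s a} = 1 := by
        rw [Nat.card_eq_one_iff_unique]
        constructor
        · constructor
          rintro ⟨x, hx⟩ ⟨y, hy⟩
          rw [hmk, ha] at hx hy
          apply Subtype.ext
          simp only []
          rcases hx with rfl | rfl <;> rcases hy with rfl | rfl <;> rfl
        · exact ⟨⟨a, rfl⟩⟩
      have e2 : Nat.card {p : {x : X // ι x = x} // Quotient.mk s p.1 = Quotient.mk s a} = 1 := by
        rw [Nat.card_eq_one_iff_unique]
        constructor
        · constructor
          rintro ⟨⟨x, hx⟩, hx2⟩ ⟨⟨y, hy⟩, hy2⟩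
          rw [hmk, ha] at hx2 hy2
          apply Subtype.ext; apply Subtype.ext
          simp only []
          rcases hx2 with rfl | rfl <;> rcases hy2 with rfl | rfl <;> rfl
        · exact ⟨⟨⟨a, ha⟩, rfl⟩⟩
      rw [e1, e2]
    · have e1 : Nat.card {x : X // Quotient.mk s x = Quotient.mk s a} = 2 := by
        have : {x : X // Quotient.mk s x = Quotient.mk s a} ≃ {x : X // x ∈ ({a, ι a} : Finset X)} :=
          Equiv.subtypeEquivRight (by intro x; rw [hmk]; simp)
        rw [Nat.card_congr this, Nat.card_eq_fintype_card, Fintype.card_coe]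
        rw [Finset.card_insert_of_notMem (by simp [Ne.symm ha]), Finset.card_singleton]
      have e2 : Nat.card {p : {x : X // ι x = x} // Quotient.mk s p.1 = Quotient.mk s a} = 0 := by
        rw [Nat.card_eq_zero]
        left
        constructor
        rintro ⟨⟨x, hx⟩, hx2⟩
        rw [hmk] at hx2
        rcases hx2 with rfl | rfl
        · exact ha hx
        · exact ha (((hι a).symm.trans hx).symm)
      rw [e1, e2]
  rw [h1, h2, ← Finset.sum_add_distrib]
  rw [Finset.sum_congr rfl (fun q _ => key q)]
  simp [mul_comm]
  exact Fintype.card_congr (Equiv.refl _)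

theorem card_modEq_card_fixedPoints (hι : Function.Involutive ι) :
    Nat.card X % 2 = Nat.card {x : X // ι x = x} % 2 := by
  have := two_mul_card_pairQuotient ι hι
  omega

end Involution

open Finset Nat

/-- Existence of a function with prescribed fiber cardinalities. -/
theorem exists_fn_fibers (m : ℕ) : ∀ (β : Type) [Fintype β] [DecidableEq β]
    (k : Fin m → ℕ), (∑ j, k j = Fintype.card β) →
    ∃ h : β → Fin m, ∀ j, Fintype.card {x : β // h x = j} = k j := by
  induction m with
  | zero =>
    intro β _ _ k hk
    simp only [Finset.univ_eq_empty, Finset.sum_empty] at hk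
    haveI : IsEmpty β := Fintype.card_eq_zero_iff.mp hk.symm
    exact ⟨fun x => isEmptyElim x, fun j => isEmptyElim j⟩
  | succ m ih =>
    intro β _ _ k hk
    obtain ⟨S, -, hS⟩ : ∃ S ⊆ (univ : Finset β), S.card = k (Fin.last m) := by
      apply Finset.exists_subset_card_eq
      rw [Finset.card_univ, ← hk, Fin.sum_univ_castSucc]
      exact Nat.le_add_left _ _
    haveI : Fintype {x : β // x ∉ S} := inferInstance
    have hmem : Fintype.card {x : β // x ∈ S} = S.card := Fintype.card_coe S
    have hcard : ∑ i : Fin m, k i.castSucc = Fintype.card {x : β // x ∉ S} := by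
      have hc := Fintype.card_subtype_compl (fun x : β => x ∈ S)
      rw [Fin.sum_univ_castSucc] at hk
      omega
    obtain ⟨h', hh'⟩ := ih {x : β // x ∉ S} (fun i => k i.castSucc) hcard
    refine ⟨fun x => if hx : x ∈ S then Fin.last m else (h' ⟨x, hx⟩).castSucc, ?_⟩
    intro j
    rcases Fin.eq_castSucc_or_eq_last j with ⟨i, rfl⟩ | rfl
    · have e : {x : β // (if hx : x ∈ S then Fin.last m else (h' ⟨x, hx⟩).castSucc) = i.castSucc}
          ≃ {y : {x : β // x ∉ S} // h' y = i} := by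
        refine ⟨fun p => ⟨⟨p.1, ?_⟩, ?_⟩, fun q => ⟨q.1.1, ?_⟩, fun p => rfl, fun q => rfl⟩
        · intro hmem
          have := p.2
          rw [dif_pos hmem] at this
          exact absurd this.symm (Fin.castSucc_lt_last i).ne
        · have := p.2
          rw [dif_neg] at this
          exact Fin.castSucc_inj.mp this
          exact fun hmem => by have := p.2; rw [dif_pos hmem] at this; exact absurd this.symm (Fin.castSucc_lt_last i).ne
        · rw [dif_neg q.1.2, q.2]
      rw [Fintype.card_congr e, hh']
    · have e : {x : β // (if hx : x ∈ S then Fin.last m else (h' ⟨x, hx⟩).castSucc) = Fin.last m}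
          ≃ {x : β // x ∈ S} := by
        refine Equiv.subtypeEquivRight ?_
        intro x
        by_cases hx : x ∈ S
        · simp [dif_pos hx, hx]
        · simp only [dif_neg hx, hx, iff_false]
          exact (Fin.castSucc_lt_last _).ne
      rw [Fintype.card_congr e, ← hS]
      exact Fintype.card_coe S

/-- The number of functions with prescribed fiber cardinalities is the multinomial. -/
theorem card_fibers_eq_multinomial {β : Type} [Fintype β] [DecidableEq β] {m : ℕ}
    (k : Fin m → ℕ) (hk : ∑ j, k j = Fintype.card β) :
    Nat.card {h : β → Fin m // ∀ j, Nat.card {x : β // h x = j} = k j}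
      = Nat.multinomial Finset.univ k := by
  classical
  obtain ⟨h₀, hh₀⟩ := exists_fn_fibers m β k hk
  set S := {h : β → Fin m // ∀ j, Nat.card {x : β // h x = j} = k j} with hSdef
  -- transitivity: every element of S is h₀ ∘ σ for some permutation σ
  have trans : ∀ h : S, ∃ σ : Equiv.Perm β, h₀ ∘ σ = h.1 := by
    rintro ⟨h, hh⟩
    have efib : ∀ j, {x : β // h x = j} ≃ {x : β // h₀ x = j} := by
      intro j
      apply Fintype.equivOfCardEq
      have := hh j
      rw [Nat.card_eq_fintype_card] at this
      rw [this, hh₀ j]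
    let σ : β ≃ β :=
      (Equiv.sigmaFiberEquiv h).symm.trans
        ((Equiv.sigmaCongrRight efib).trans (Equiv.sigmaFiberEquiv h₀))
    refine ⟨σ, funext fun x => ?_⟩
    simp only [σ, Function.comp_apply, Equiv.trans_apply, Equiv.sigmaCongrRight_apply,
      Equiv.sigmaFiberEquiv]
    exact (efib _ _).2
  have stab_card : Fintype.card {σ : Equiv.Perm β // h₀ ∘ σ = h₀} = ∏ j, (k j)! := by
    rw [DomMulAct.stabilizer_card]
    exact Finset.prod_congr rfl fun j _ => by rw [hh₀ j]
  have fiber_card : ∀ h : S, Fintype.card {σ : Equiv.Perm β // h₀ ∘ σ = h.1} = ∏ j, (k j)! := by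
    intro h
    obtain ⟨τ, hτ⟩ := trans h
    rw [← stab_card]
    apply Fintype.card_congr
    refine ⟨fun p => ⟨p.1 * τ⁻¹, ?_⟩, fun p => ⟨p.1 * τ, ?_⟩, fun p => ?_, fun p => ?_⟩
    · funext x
      have h1 := congrFun p.2 (τ⁻¹ x)
      have h2 := congrFun hτ (τ⁻¹ x)
      simp only [Function.comp_apply, Equiv.Perm.coe_mul] at h1 h2 ⊢
      rw [h1, ← h2]; exact congrArg h₀ (τ.apply_symm_apply x)
    · funext x
      have h1 := congrFun p.2 (τ x)
      have h2 := congrFun hτ x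
      simp only [Function.comp_apply, Equiv.Perm.coe_mul] at h1 h2 ⊢
      rw [h1, h2]
    · apply Subtype.ext; simp [mul_assoc]
    · apply Subtype.ext; simp [mul_assoc]
  -- total count
  have hmap : ∀ σ : Equiv.Perm β, ∀ j, Nat.card {x : β // (h₀ ∘ σ) x = j} = k j := by
    intro σ j
    rw [Nat.card_eq_fintype_card, ← hh₀ j]
    exact Fintype.card_congr (σ.subtypeEquiv fun x => Iff.rfl)
  have total : Fintype.card (Equiv.Perm β) = Fintype.card S * ∏ j, (k j)! := by
    have e := Equiv.sigmaFiberEquiv (fun σ : Equiv.Perm β => (⟨h₀ ∘ σ, hmap σ⟩ : S))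
    rw [← Fintype.card_congr e, Fintype.card_sigma]
    have hfib : ∀ h : S, Fintype.card {σ : Equiv.Perm β // (⟨h₀ ∘ σ, hmap σ⟩ : S) = h}
        = ∏ j, (k j)! := by
      intro h
      rw [← fiber_card h]
      apply Fintype.card_congr
      exact Equiv.subtypeEquivRight fun σ => by
        constructor
        · intro hx; exact congrArg Subtype.val hx
        · intro hx; exact Subtype.ext hx
    rw [Finset.sum_congr rfl (fun h _ => hfib h), Finset.sum_const, Finset.card_univ,
      smul_eq_mul]
  have spec := Nat.multinomial_spec (Finset.univ : Finset (Fin m)) k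
  rw [hk] at spec
  rw [Fintype.card_perm] at total
  have hpos : 0 < ∏ j, (k j)! := Finset.prod_pos fun j _ => Nat.factorial_pos _
  have heq : Fintype.card S * ∏ j, (k j)! = Nat.multinomial Finset.univ k * ∏ j, (k j)! := by
    rw [← total, mul_comm (Nat.multinomial _ _), spec]
  rw [Nat.card_eq_fintype_card]
  exact Nat.eq_of_mul_eq_mul_right hpos heq

open Finset

section ZModFacts

variable {L : ℕ} [NeZero (2 * L)]

lemma zmL_val (hL : 1 ≤ L) : ((L : ZMod (2 * L))).val = L :=
  ZMod.val_cast_of_lt (by omega)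

lemma zmL_ne_zero (hL : 1 ≤ L) : (L : ZMod (2 * L)) ≠ 0 := by
  intro h
  have := zmL_val (L := L) hL
  rw [h, ZMod.val_zero] at this
  omega

lemma zmL_add_self : (L : ZMod (2 * L)) + (L : ZMod (2 * L)) = 0 := by
  rw [← Nat.cast_add]
  have : L + L = 2 * L := by ring
  rw [this, ZMod.natCast_self]

lemma neg_eq_self_iff (hL : 1 ≤ L) (x : ZMod (2 * L)) :
    -x = x ↔ x = 0 ∨ x = (L : ZMod (2 * L)) := by
  constructor
  · intro h
    have hxx : x + x = 0 := by
      nth_rewrite 1 [← h]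
      exact neg_add_cancel x
    have h2 : ((x.val + x.val : ℕ) : ZMod (2 * L)) = 0 := by
      rw [Nat.cast_add, ZMod.natCast_zmod_val]
      exact hxx
    rw [ZMod.natCast_eq_zero_iff] at h2
    obtain ⟨c, hc⟩ := h2
    rw [mul_assoc] at hc
    have hlt : x.val < 2 * L := ZMod.val_lt x
    have hc2 : c < 2 := by
      by_contra hge
      push_neg at hge
      have h2' := Nat.mul_le_mul_left L hge
      omega
    interval_cases c
    · left
      rw [← ZMod.val_eq_zero]
      omega
    · right
      apply ZMod.val_injective
      rw [zmL_val hL]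
      omega
  · rintro (rfl | rfl)
    · simp
    · rw [neg_eq_iff_add_eq_zero]
      exact zmL_add_self

lemma double_val_even (x : ZMod (2 * L)) : (x + x).val % 2 = 0 := by
  rw [ZMod.val_add]
  have := Nat.mod_mod_of_dvd (x.val + x.val) (⟨L, rfl⟩ : 2 ∣ 2 * L)
  omega

lemma exists_half (hL : 1 ≤ L) (s : ZMod (2 * L)) (h : s.val % 2 = 0) :
    ∃ t : ZMod (2 * L), t + t = s := by
  refine ⟨((s.val / 2 : ℕ) : ZMod (2 * L)), ?_⟩
  rw [← Nat.cast_add]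
  have : s.val / 2 + s.val / 2 = s.val := by omega
  rw [this, ZMod.natCast_zmod_val]

end ZModFacts

section FiberPartition

variable {m L : ℕ} [NeZero (2 * L)]

lemma card_fiber_eq (F : ZMod (2 * L) → Fin m) (j : Fin m) :
    Nat.card {x : ZMod (2 * L) // F x = j} = (univ.filter fun x => F x = j).card := by
  rw [Nat.card_eq_fintype_card, Fintype.card_subtype]

/-- Partition of a symmetric fiber into `0`, `L`, upper half, lower half. -/
lemma fiber_partition (hL : 1 ≤ L) (F : ZMod (2 * L) → Fin m) (hF : ∀ x, F (-x) = F x)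
    (j : Fin m) :
    (univ.filter fun x => F x = j).card
      = ((if F 0 = j then 1 else 0) + (if F (L : ZMod (2 * L)) = j then 1 else 0))
        + 2 * (univ.filter fun x : ZMod (2 * L) => (0 < x.val ∧ x.val < L) ∧ F x = j).card := by
  classical
  set s := univ.filter fun x : ZMod (2 * L) => F x = j with hs
  have step1 := Finset.card_filter_add_card_filter_not
    (s := s) (p := fun x : ZMod (2 * L) => x.val = 0)
  have c0 : (s.filter fun x => x.val = 0).card = (if F 0 = j then 1 else 0) := by
    split_ifs with h
    · rw [Finset.card_eq_one]
      refine ⟨0, ?_⟩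
      ext x
      simp only [Finset.mem_filter, Finset.mem_singleton, hs, Finset.mem_univ, true_and,
        ZMod.val_eq_zero]
      constructor
      · rintro ⟨-, rfl⟩; rfl
      · rintro rfl; exact ⟨h, rfl⟩
    · rw [Finset.card_eq_zero]
      ext x
      simp only [Finset.mem_filter, hs, Finset.mem_univ, true_and, ZMod.val_eq_zero,
        Finset.notMem_empty, iff_false, not_and]
      rintro hx rfl; exact h hx
  set t := s.filter fun x : ZMod (2 * L) => ¬ x.val = 0 with ht
  have step2 := Finset.card_filter_add_card_filter_not
    (s := t) (p := fun x : ZMod (2 * L) => x.val = L)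
  have cL : (t.filter fun x => x.val = L).card = (if F (L : ZMod (2 * L)) = j then 1 else 0) := by
    have hvx : ∀ x : ZMod (2 * L), x.val = L ↔ x = (L : ZMod (2 * L)) := by
      intro x
      constructor
      · intro hx; apply ZMod.val_injective; rw [zmL_val hL, hx]
      · rintro rfl; exact zmL_val hL
    split_ifs with h
    · rw [Finset.card_eq_one]
      refine ⟨(L : ZMod (2 * L)), ?_⟩
      ext x
      simp only [Finset.mem_filter, Finset.mem_singleton, ht, hs, Finset.mem_univ, true_and]
      constructor
      · rintro ⟨⟨-, -⟩, hx⟩; exact (hvx x).mp hx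
      · rintro rfl
        refine ⟨⟨h, ?_⟩, zmL_val hL⟩
        rw [zmL_val hL]; omega
    · rw [Finset.card_eq_zero]
      ext x
      simp only [Finset.mem_filter, ht, hs, Finset.mem_univ, true_and, Finset.notMem_empty,
        iff_false, not_and]
      rintro ⟨hx, -⟩ hxL
      exact h ((hvx x).mp hxL ▸ hx)
  set u := t.filter fun x : ZMod (2 * L) => ¬ x.val = L with hu
  have step3 := Finset.card_filter_add_card_filter_not
    (s := u) (p := fun x : ZMod (2 * L) => x.val < L)
  have hA : u.filter (fun x : ZMod (2 * L) => x.val < L)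
      = univ.filter fun x : ZMod (2 * L) => (0 < x.val ∧ x.val < L) ∧ F x = j := by
    ext x
    simp only [Finset.mem_filter, hu, ht, hs, Finset.mem_univ, true_and]
    constructor
    · rintro ⟨⟨⟨hj, h0⟩, -⟩, hlt⟩
      exact ⟨⟨Nat.pos_of_ne_zero h0, hlt⟩, hj⟩
    · rintro ⟨⟨h0, hlt⟩, hj⟩
      exact ⟨⟨⟨hj, by omega⟩, by omega⟩, hlt⟩
  have hB : (u.filter fun x : ZMod (2 * L) => ¬ x.val < L).card
      = (u.filter fun x : ZMod (2 * L) => x.val < L).card := by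
    apply Finset.card_bij (fun x _ => -x)
    · intro x hx
      simp only [Finset.mem_filter, hu, ht, hs, Finset.mem_univ, true_and] at hx ⊢
      obtain ⟨⟨⟨hj, h0⟩, hL'⟩, hge⟩ := hx
      have hx0 : x ≠ 0 := fun h => h0 (by rw [h, ZMod.val_zero])
      have hneg : (-x).val = 2 * L - x.val := by
        rw [ZMod.neg_val, if_neg hx0]
      have hlt : x.val < 2 * L := ZMod.val_lt x
      refine ⟨⟨⟨by rw [hF]; exact hj, ?_⟩, ?_⟩, ?_⟩ <;> rw [hneg] <;> omega
    · intro x hx y hy h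
      exact neg_injective h
    · intro y hy
      refine ⟨-y, ?_, neg_neg y⟩
      simp only [Finset.mem_filter, hu, ht, hs, Finset.mem_univ, true_and] at hy ⊢
      obtain ⟨⟨⟨hj, h0⟩, hL'⟩, hlt⟩ := hy
      have hy0 : y ≠ 0 := fun h => h0 (by rw [h, ZMod.val_zero])
      have hneg : (-y).val = 2 * L - y.val := by
        rw [ZMod.neg_val, if_neg hy0]
      have hlt2 : y.val < 2 * L := ZMod.val_lt y
      refine ⟨⟨⟨by rw [hF]; exact hj, ?_⟩, ?_⟩, ?_⟩ <;> rw [hneg] <;> omega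
  rw [← hA]
  omega

/-- mod-2 count of a symmetric fiber. -/
lemma fiber_parity (hL : 1 ≤ L) (F : ZMod (2 * L) → Fin m) (hF : ∀ x, F (-x) = F x)
    (j : Fin m) :
    (univ.filter fun x : ZMod (2 * L) => F x = j).card % 2
      = ((if F 0 = j then 1 else 0) + (if F (L : ZMod (2 * L)) = j then 1 else 0)) % 2 := by
  have := fiber_partition hL F hF j
  omega

/-- A fiber invariant under `x ↦ x + L` has even cardinality. -/
lemma fiber_even_of_addL (hL : 1 ≤ L) (F : ZMod (2 * L) → Fin m)
    (hF : ∀ x, F (x + L) = F x) (j : Fin m) :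
    (univ.filter fun x : ZMod (2 * L) => F x = j).card % 2 = 0 := by
  classical
  set ι : {x : ZMod (2 * L) // F x = j} → {x : ZMod (2 * L) // F x = j} :=
    fun p => ⟨p.1 + L, by rw [hF, p.2]⟩ with hι
  have hinv : Function.Involutive ι := by
    intro p
    apply Subtype.ext
    show p.1 + L + L = p.1
    rw [add_assoc, zmL_add_self, add_zero]
  have hpar := card_modEq_card_fixedPoints ι hinv
  have hfix : Nat.card {p : {x : ZMod (2 * L) // F x = j} // ι p = p} = 0 := by
    rw [Nat.card_eq_zero]
    left
    constructor
    rintro ⟨⟨x, hx⟩, hfix⟩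
    have : x + L = x := congrArg Subtype.val hfix
    have : (L : ZMod (2 * L)) = 0 := by
      have := congrArg (fun y => y - x) this
      simpa [add_comm, add_sub_cancel_right] using this
    exact zmL_ne_zero hL this
  rw [hfix] at hpar
  rw [← card_fiber_eq]
  omega

end FiberPartition


/-- A coloring of the regular `N`-gon in `m` colors with multiplicities `n`:
a function `f : ZMod N → Fin m` whose fiber over each color `j` has cardinality `n j`. -/
def IsColoring (N m : ℕ) (n : Fin m → ℕ) (f : ZMod N → Fin m) : Prop :=
  ∀ j, Nat.card {x : ZMod N // f x = j} = n j

/-- Cyclic equivalence of colorings: one is obtained from the other by a rotation `x ↦ x + c`. -/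
def cyclicSetoid (N m : ℕ) (n : Fin m → ℕ) :
    Setoid {f : ZMod N → Fin m // IsColoring N m n f} where
  r f g := ∃ c : ZMod N, ∀ x, (g : ZMod N → Fin m) x = (f : ZMod N → Fin m) (x + c)
  iseqv := by
    refine ⟨fun f => ⟨0, fun x => by rw [add_zero]⟩, ?_, ?_⟩
    · rintro f g ⟨c, h⟩
      exact ⟨-c, fun x => by rw [h, neg_add_cancel_right]⟩
    · rintro f g k ⟨c, h1⟩ ⟨d, h2⟩
      exact ⟨d + c, fun x => by rw [h2, h1, add_assoc]⟩

/-- The number of cyclic necklaces: orbits of colorings under rotations. -/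
noncomputable def gammaC (N m : ℕ) (n : Fin m → ℕ) : ℕ :=
  Nat.card (Quotient (cyclicSetoid N m n))

/-- Dihedral equivalence of colorings: one is obtained from the other by an element of
the subgroup of permutations of `ZMod N` generated by `x ↦ x + 1` and `x ↦ -x`. -/
def dihedralSetoid (N m : ℕ) (n : Fin m → ℕ) :
    Setoid {f : ZMod N → Fin m // IsColoring N m n f} where
  r f g := ∃ σ ∈ Subgroup.closure
      ({Equiv.addRight (1 : ZMod N), Equiv.neg (ZMod N)} : Set (Equiv.Perm (ZMod N))),
      ∀ x, (g : ZMod N → Fin m) x = (f : ZMod N → Fin m) (σ x)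
  iseqv := by
    refine ⟨fun f => ⟨1, one_mem _, fun x => rfl⟩, ?_, ?_⟩
    · rintro f g ⟨σ, hσ, h⟩
      exact ⟨σ⁻¹, inv_mem hσ, fun x => by rw [h]; exact congrArg _ (σ.apply_symm_apply x).symm⟩
    · rintro f g k ⟨σ, hσ, h1⟩ ⟨τ, hτ, h2⟩
      exact ⟨σ * τ, mul_mem hσ hτ, fun x => by rw [h2, h1, Equiv.Perm.mul_apply]⟩

/-- The number of dihedral necklaces: orbits of colorings under rotations and reflections. -/
noncomputable def gammaD (N m : ℕ) (n : Fin m → ℕ) : ℕ :=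
  Nat.card (Quotient (dihedralSetoid N m n))

section Necklace

variable {N m : ℕ} {n : Fin m → ℕ}

/-- The reflected coloring `x ↦ f (-x)`. -/
def negColoring (f : {f : ZMod N → Fin m // IsColoring N m n f}) :
    {f : ZMod N → Fin m // IsColoring N m n f} :=
  ⟨fun x => f.1 (-x), fun j => by
    rw [← f.2 j]
    exact Nat.card_congr
      { toFun := fun p => ⟨-p.1, p.2⟩
        invFun := fun p => ⟨-p.1, show f.1 (- -p.1) = j by rw [neg_neg]; exact p.2⟩
        left_inv := fun p => by apply Subtype.ext; simp
        right_inv := fun p => by apply Subtype.ext; simp }⟩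

lemma addRight_natCast_mem [NeZero N] (k : ℕ) :
    Equiv.addRight ((k : ZMod N)) ∈ Subgroup.closure
      ({Equiv.addRight (1 : ZMod N), Equiv.neg (ZMod N)} : Set (Equiv.Perm (ZMod N))) := by
  induction k with
  | zero => simpa using one_mem _
  | succ k ih =>
    have : Equiv.addRight ((k + 1 : ℕ) : ZMod N)
        = Equiv.addRight ((k : ZMod N)) * Equiv.addRight (1 : ZMod N) := by
      apply Equiv.ext
      intro x
      simp only [Equiv.coe_addRight, Equiv.Perm.mul_apply]
      push_cast
      ring
    rw [this]
    exact mul_mem ih (Subgroup.subset_closure (Or.inl rfl))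

lemma addRight_mem [NeZero N] (c : ZMod N) :
    Equiv.addRight c ∈ Subgroup.closure
      ({Equiv.addRight (1 : ZMod N), Equiv.neg (ZMod N)} : Set (Equiv.Perm (ZMod N))) := by
  have := addRight_natCast_mem (N := N) c.val
  rwa [ZMod.natCast_zmod_val] at this

lemma mem_dihedral_iff [NeZero N] {σ : Equiv.Perm (ZMod N)} :
    σ ∈ Subgroup.closure
      ({Equiv.addRight (1 : ZMod N), Equiv.neg (ZMod N)} : Set (Equiv.Perm (ZMod N)))
    ↔ ∃ c : ZMod N, σ = Equiv.addRight c ∨ σ = Equiv.addRight c * Equiv.neg (ZMod N) := by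
  constructor
  · intro hσ
    induction hσ using Subgroup.closure_induction with
    | mem x hx =>
      rcases hx with rfl | rfl
      · exact ⟨1, Or.inl rfl⟩
      · refine ⟨0, Or.inr ?_⟩
        apply Equiv.ext
        intro x
        simp [Equiv.coe_addRight, Equiv.Perm.mul_apply, Equiv.neg_apply]
    | one => exact ⟨0, Or.inl (by simp)⟩
    | mul x y hx hy ihx ihy =>
      obtain ⟨c, hc | hc⟩ := ihx <;> obtain ⟨d, hd | hd⟩ := ihy <;> subst hc hd
      · refine ⟨d + c, Or.inl (Equiv.ext fun z => ?_)⟩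
        simp only [Equiv.coe_addRight, Equiv.Perm.mul_apply]
        ring
      · refine ⟨d + c, Or.inr (Equiv.ext fun z => ?_)⟩
        simp only [Equiv.coe_addRight, Equiv.Perm.mul_apply, Equiv.neg_apply]
        ring
      · refine ⟨c - d, Or.inr (Equiv.ext fun z => ?_)⟩
        simp only [Equiv.coe_addRight, Equiv.Perm.mul_apply, Equiv.neg_apply]
        ring
      · refine ⟨c - d, Or.inl (Equiv.ext fun z => ?_)⟩
        simp only [Equiv.coe_addRight, Equiv.Perm.mul_apply, Equiv.neg_apply]
        ring
    | inv x hx ihx =>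
      obtain ⟨c, hc | hc⟩ := ihx <;> subst hc
      · refine ⟨-c, Or.inl ?_⟩
        rw [inv_eq_iff_mul_eq_one]
        refine Equiv.ext fun z => ?_
        simp only [Equiv.coe_addRight, Equiv.Perm.mul_apply, Equiv.Perm.coe_one, id_eq]
        ring
      · refine ⟨c, Or.inr ?_⟩
        rw [inv_eq_iff_mul_eq_one]
        refine Equiv.ext fun z => ?_
        simp only [Equiv.coe_addRight, Equiv.Perm.mul_apply, Equiv.neg_apply,
          Equiv.Perm.coe_one, id_eq]
        ring
  · rintro ⟨c, rfl | rfl⟩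
    · exact addRight_mem c
    · exact mul_mem (addRight_mem c) (Subgroup.subset_closure (Or.inr rfl))

lemma dihedral_rel_iff [NeZero N] (f g : {f : ZMod N → Fin m // IsColoring N m n f}) :
    (dihedralSetoid N m n).r f g
      ↔ (cyclicSetoid N m n).r f g ∨ (cyclicSetoid N m n).r (negColoring f) g := by
  constructor
  · rintro ⟨σ, hσ, h⟩
    rw [mem_dihedral_iff] at hσ
    obtain ⟨c, rfl | rfl⟩ := hσ
    · left
      exact ⟨c, fun x => by simpa [Equiv.coe_addRight] using h x⟩
    · right
      refine ⟨-c, fun x => ?_⟩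
      have := h x
      simp only [Equiv.Perm.mul_apply, Equiv.coe_addRight, Equiv.neg_apply] at this
      rw [this]
      show f.1 (-x + c) = f.1 (-(x + -c))
      ring_nf
  · rintro (⟨c, h⟩ | ⟨c, h⟩)
    · exact ⟨Equiv.addRight c, addRight_mem c,
        fun x => by simpa [Equiv.coe_addRight] using h x⟩
    · refine ⟨Equiv.addRight (-c) * Equiv.neg (ZMod N),
        mul_mem (addRight_mem (-c)) (Subgroup.subset_closure (Or.inr rfl)), fun x => ?_⟩
      have := h x
      rw [this]
      simp only [Equiv.Perm.mul_apply, Equiv.coe_addRight, Equiv.neg_apply]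
      show f.1 (-(x + c)) = f.1 (-x + -c)
      ring_nf

/-- Reflection as an involution of the set of cyclic necklaces. -/
def negQ : Quotient (cyclicSetoid N m n) → Quotient (cyclicSetoid N m n) :=
  Quotient.map' negColoring (by
    rintro f g ⟨c, h⟩
    refine ⟨-c, fun x => ?_⟩
    show g.1 (-x) = f.1 (-(x + -c))
    rw [h (-x)]
    ring_nf)

lemma negQ_mk (f : {f : ZMod N → Fin m // IsColoring N m n f}) :
    negQ (Quotient.mk (cyclicSetoid N m n) f) = Quotient.mk _ (negColoring f) := rfl

lemma negQ_involutive : Function.Involutive (negQ (N := N) (m := m) (n := n)) := by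
  apply Quotient.ind
  intro f
  rw [negQ_mk, negQ_mk]
  congr 1
  apply Subtype.ext
  funext x
  show f.1 (- - x) = f.1 x
  rw [neg_neg]

/-- The dihedral necklaces are the quotient of the cyclic necklaces by reflection. -/
noncomputable def dihedralEquivPair [NeZero N] :
    Quotient (dihedralSetoid N m n) ≃ Quotient (pairSetoid (negQ (N := N) (m := m) (n := n)) negQ_involutive) := by
  refine ⟨Quotient.lift (fun f => Quotient.mk _ (Quotient.mk _ f)) ?_,
    Quotient.lift (Quotient.lift (fun f => Quotient.mk _ f) ?_) ?_, ?_, ?_⟩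
  · intro f g hfg
    have hfg2 := (dihedral_rel_iff f g).mp hfg
    apply Quotient.sound
    rcases hfg2 with h | h
    · exact Or.inl (Quotient.sound h)
    · exact Or.inr (Quotient.sound h)
  · intro f g hfg
    exact Quotient.sound ((dihedral_rel_iff f g).mpr (Or.inl hfg))
  · rintro a b hab
    induction a using Quotient.ind with | _ f =>
    induction b using Quotient.ind with | _ g =>
    rcases hab with h | h
    · rw [h]
    · rw [negQ_mk] at h
      have hrel : (cyclicSetoid N m n).r (negColoring f) g := Quotient.exact h
      simp only [Quotient.lift_mk]
      exact Quotient.sound ((dihedral_rel_iff f g).mpr (Or.inr hrel))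
  · apply Quotient.ind
    intro f
    rfl
  · apply Quotient.ind
    intro q
    induction q using Quotient.ind with | _ f =>
    rfl

theorem two_mul_gammaD [NeZero N] :
    2 * gammaD N m n = gammaC N m n
      + Nat.card {q : Quotient (cyclicSetoid N m n) // negQ q = q} := by
  classical
  letI : Fintype (Quotient (cyclicSetoid N m n)) := Fintype.ofFinite _
  have h := two_mul_card_pairQuotient (negQ (N := N) (m := m) (n := n)) negQ_involutive
  rw [gammaD, Nat.card_congr (dihedralEquivPair (N := N) (m := m) (n := n)), h, gammaC]

end Necklace
section Canonical

variable {m L : ℕ} [NeZero (2 * L)] {n : Fin m → ℕ} {j₁ j₂ : Fin m}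

/-- Parity of indicator endpoints for a symmetric coloring with odd fiber. -/
lemma ind_count (hL : 1 ≤ L) (F : ZMod (2 * L) → Fin m)
    (hFc : ∀ j, Nat.card {x : ZMod (2 * L) // F x = j} = n j)
    (hF : ∀ x, F (-x) = F x) {j : Fin m} (hodd : Odd (n j)) :
    ((if F 0 = j then 1 else 0) + (if F (L : ZMod (2 * L)) = j then 1 else 0) : ℕ) = 1 := by
  have hp := fiber_parity hL F hF j
  rw [← card_fiber_eq, hFc j] at hp
  have h2 := Nat.odd_iff.mp hodd
  split_ifs at hp ⊢ <;> omega

/-- The endpoint values and half-fiber counts of a canonical symmetric coloring. -/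
lemma canonical_props (hL : 1 ≤ L) (hne : j₁ ≠ j₂) (h₁ : Odd (n j₁)) (h₂ : Odd (n j₂))
    (F : ZMod (2 * L) → Fin m)
    (hFc : ∀ j, Nat.card {x : ZMod (2 * L) // F x = j} = n j)
    (hF : ∀ x, F (-x) = F x) (hF0 : F 0 = j₁) :
    F (L : ZMod (2 * L)) = j₂ ∧
      ∀ j, (univ.filter fun x : ZMod (2 * L) => (0 < x.val ∧ x.val < L) ∧ F x = j).card
        = n j / 2 := by
  have hFL : F (L : ZMod (2 * L)) = j₂ := by
    have := ind_count hL F hFc hF h₂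
    rw [if_neg (by rw [hF0]; exact hne)] at this
    split_ifs at this with h
    · exact h
    · omega
  have hFL1 : F (L : ZMod (2 * L)) ≠ j₁ := by rw [hFL]; exact Ne.symm hne
  refine ⟨hFL, fun j => ?_⟩
  have hpart := fiber_partition hL F hF j
  rw [← card_fiber_eq, hFc j] at hpart
  by_cases hj1 : j = j₁
  · subst hj1
    rw [if_pos hF0, if_neg hFL1] at hpart
    have h2 := Nat.odd_iff.mp h₁
    omega
  · by_cases hj2 : j = j₂
    · subst hj2
      rw [if_neg (by rw [hF0]; exact fun h => hj1 h.symm), if_pos hFL] at hpart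
      have h2 := Nat.odd_iff.mp h₂
      omega
    · rw [if_neg (by rw [hF0]; exact fun h => hj1 h.symm),
        if_neg (by rw [hFL]; exact fun h => hj2 h.symm)] at hpart
      omega

/-- Uniqueness of the canonical symmetric representative. -/
lemma canonical_unique (hL : 1 ≤ L) (h₁ : Odd (n j₁))
    (F G : ZMod (2 * L) → Fin m)
    (hFc : ∀ j, Nat.card {x : ZMod (2 * L) // F x = j} = n j)
    (hF : ∀ x, F (-x) = F x) (hG : ∀ x, G (-x) = G x)
    (hF0 : F 0 = j₁) (hG0 : G 0 = j₁)
    (c : ZMod (2 * L)) (hc : ∀ x, G x = F (x + c)) : G = F := by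
  have hodd2 := Nat.odd_iff.mp h₁
  have h1 : ∀ y, F (y + c) = F (-y + c) := by
    intro y
    rw [← hc y, ← hc (-y)]
    exact (hG y).symm
  have step1 : ∀ x, F (x + (c + c)) = F x := by
    intro x
    have e1 : x + (c + c) = (x + c) + c := by ring
    rw [e1, h1 (x + c)]
    have e3 : -(-(x + c) + c) = x := by ring
    rw [← hF (-(x + c) + c), e3]
  have iter : ∀ (k : ℕ) (x : ZMod (2 * L)), F (x + k • (c + c)) = F x := by
    intro k
    induction k with
    | zero => intro x; simp
    | succ k ih =>
      intro x
      have e : x + (k + 1) • (c + c) = (x + (c + c)) + k • (c + c) := by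
        rw [succ_nsmul]; abel
      rw [e, ih (x + (c + c)), step1]
  set d := addOrderOf (c + c) with hd
  have hd0 : 0 < d := addOrderOf_pos (c + c)
  have hdsmul : d • (c + c) = 0 := addOrderOf_nsmul_eq_zero (c + c)
  have hdodd : d % 2 = 1 := by
    by_contra h'
    have hdeven : d % 2 = 0 := by omega
    set e := d / 2 with he
    have he0 : 0 < e := by omega
    have hed : e < d := by omega
    set w : ZMod (2 * L) := e • (c + c) with hw
    have hw0 : w ≠ 0 := by
      intro h0
      have := addOrderOf_dvd_of_nsmul_eq_zero h0
      rw [← hd] at this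
      have := Nat.le_of_dvd he0 this
      omega
    have h2w : w + w = 0 := by
      rw [hw, ← add_nsmul]
      have : e + e = d := by omega
      rw [this, hdsmul]
    have hwL : w = (L : ZMod (2 * L)) := by
      have := (neg_eq_self_iff hL w).mp (neg_eq_iff_add_eq_zero.mpr h2w)
      tauto
    have haddL : ∀ x, F (x + (L : ZMod (2 * L))) = F x := by
      intro x
      rw [← hwL, hw]
      exact iter e x
    have := fiber_even_of_addL hL F haddL j₁
    rw [← card_fiber_eq, hFc j₁] at this
    omega
  set h : ZMod (2 * L) := ((d + 1) / 2) • (c + c) with hh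
  have hhF : ∀ x, F (x + h) = F x := fun x => iter _ x
  have hh2 : h + h = c + c := by
    rw [hh, ← add_nsmul]
    have he : (d + 1) / 2 + (d + 1) / 2 = d + 1 := by omega
    rw [he, succ_nsmul, hdsmul, zero_add]
  have hu2 : (c - h) + (c - h) = 0 := by
    have e : (c - h) + (c - h) = (c + c) - (h + h) := by ring
    rw [e, hh2, sub_self]
  have := (neg_eq_self_iff hL (c - h)).mp (neg_eq_iff_add_eq_zero.mpr hu2)
  rcases this with h0 | hL'
  · have hch : c = h := by
      have := sub_eq_zero.mp h0
      exact this
    funext x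
    rw [hc x, hch, hhF]
  · exfalso
    have hcL : c = (L : ZMod (2 * L)) + h := by
      rw [← hL']; ring
    have hFLj : F (L : ZMod (2 * L)) = j₁ := by
      have := hc 0
      rw [hG0, zero_add, hcL, hhF] at this
      exact this.symm
    have hp := ind_count hL F hFc hF h₁
    rw [if_pos hF0, if_pos hFLj] at hp
    omega

/-- Existence of a canonical symmetric representative for an achiral necklace. -/
lemma canonical_exists (hL : 1 ≤ L) (h₁ : Odd (n j₁))
    (q : Quotient (cyclicSetoid (2 * L) m n)) (hq : negQ q = q) :
    ∃ f : {f : ZMod (2 * L) → Fin m // IsColoring (2 * L) m n f},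
      Quotient.mk (cyclicSetoid (2 * L) m n) f = q ∧ (∀ x, f.1 (-x) = f.1 x) ∧ f.1 0 = j₁ := by
  have hodd2 := Nat.odd_iff.mp h₁
  obtain ⟨f, rfl⟩ := q.exists_rep
  rw [negQ_mk] at hq
  obtain ⟨c, hc⟩ := Quotient.exact hq
  -- hc : ∀ x, f.1 x = (negColoring f).1 (x + c), i.e. f x = f (-(x+c))
  set s : ZMod (2 * L) := -c with hs
  have hcs : ∀ x, f.1 x = f.1 (s - x) := by
    intro x
    have := hc x
    show f.1 x = f.1 (s - x)
    rw [this]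
    show f.1 (-(x + c)) = f.1 (s - x)
    rw [hs]; ring_nf
  by_cases hpar : s.val % 2 = 0
  · obtain ⟨t, ht⟩ := exists_half hL s hpar
    -- translate by t
    have htrans : ∀ u : ZMod (2 * L), IsColoring (2 * L) m n (fun x => f.1 (x + u)) := by
      intro u j
      rw [← f.2 j]
      exact Nat.card_congr
        { toFun := fun p => ⟨p.1 + u, p.2⟩
          invFun := fun p => ⟨p.1 - u, show f.1 (p.1 - u + u) = j by rw [sub_add_cancel]; exact p.2⟩
          left_inv := fun p => by apply Subtype.ext; simp
          right_inv := fun p => by apply Subtype.ext; simp }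
    set g : {f : ZMod (2 * L) → Fin m // IsColoring (2 * L) m n f} :=
      ⟨fun x => f.1 (x + t), htrans t⟩ with hg
    have hgsym : ∀ x, g.1 (-x) = g.1 x := by
      intro x
      show f.1 (-x + t) = f.1 (x + t)
      rw [hcs (-x + t)]
      congr 1
      rw [← ht]; ring
    have hgq : Quotient.mk (cyclicSetoid (2 * L) m n) g
        = Quotient.mk (cyclicSetoid (2 * L) m n) f := by
      apply Quotient.sound
      refine ⟨-t, fun x => ?_⟩
      show f.1 x = f.1 ((x + -t) + t)
      congr 1
      ring
    have hind := ind_count hL g.1 g.2 hgsym h₁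
    by_cases hg0 : g.1 0 = j₁
    · exact ⟨g, hgq, hgsym, hg0⟩
    · have hgL : g.1 (L : ZMod (2 * L)) = j₁ := by
        rw [if_neg hg0] at hind
        split_ifs at hind with h
        · exact h
        · omega
      set g' : {f : ZMod (2 * L) → Fin m // IsColoring (2 * L) m n f} :=
        ⟨fun x => f.1 (x + ((L : ZMod (2 * L)) + t)), htrans _⟩ with hg'
      have hgg' : ∀ x, g'.1 x = g.1 (x + (L : ZMod (2 * L))) := by
        intro x
        show f.1 (x + ((L : ZMod (2 * L)) + t)) = f.1 ((x + L) + t)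
        congr 1
        ring
      have hg'sym : ∀ x, g'.1 (-x) = g'.1 x := by
        intro x
        rw [hgg', hgg']
        have hnegL : -(L : ZMod (2 * L)) = L := neg_eq_iff_add_eq_zero.mpr zmL_add_self
        have e : -x + (L : ZMod (2 * L)) = -(x + L) := by rw [neg_add, hnegL]
        rw [e, hgsym]
      have hg'q : Quotient.mk (cyclicSetoid (2 * L) m n) g'
          = Quotient.mk (cyclicSetoid (2 * L) m n) f := by
        apply Quotient.sound
        refine ⟨-((L : ZMod (2 * L)) + t), fun x => ?_⟩
        show f.1 x = f.1 ((x + -((L : ZMod (2 * L)) + t)) + ((L : ZMod (2 * L)) + t))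
        congr 1
        ring
      have hg'0 : g'.1 0 = j₁ := by
        rw [hgg' 0, zero_add]
        exact hgL
      exact ⟨g', hg'q, hg'sym, hg'0⟩
  · exfalso
    set ι : {x : ZMod (2 * L) // f.1 x = j₁} → {x : ZMod (2 * L) // f.1 x = j₁} :=
      fun p => ⟨s - p.1, by rw [← hcs p.1]; exact p.2⟩ with hι
    have hinv : Function.Involutive ι := by
      intro p
      apply Subtype.ext
      show s - (s - p.1) = p.1
      ring
    have hpr := card_modEq_card_fixedPoints ι hinv
    have hfix : Nat.card {p : {x : ZMod (2 * L) // f.1 x = j₁} // ι p = p} = 0 := by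
      rw [Nat.card_eq_zero]
      left
      constructor
      rintro ⟨⟨x, hx⟩, hfixed⟩
      have hsx : s - x = x := congrArg Subtype.val hfixed
      have hxx : x + x = s := by linear_combination -hsx
      have hev := double_val_even (L := L) x
      rw [hxx] at hev
      omega
    rw [hfix, f.2 j₁] at hpr
    omega

end Canonical
section Extension

variable {m L : ℕ} [NeZero (2 * L)] {n : Fin m → ℕ}

/-- Extension of a coloring of the open upper half to a symmetric coloring. -/
def extFun (j₁ j₂ : Fin m) (h : {x : ZMod (2 * L) // 0 < x.val ∧ x.val < L} → Fin m) :
    ZMod (2 * L) → Fin m := fun x =>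
  if hx : 0 < x.val ∧ x.val < L then h ⟨x, hx⟩
  else if hx' : 0 < (-x).val ∧ (-x).val < L then h ⟨-x, hx'⟩
  else if x = 0 then j₁ else j₂

variable {j₁ j₂ : Fin m} {h : {x : ZMod (2 * L) // 0 < x.val ∧ x.val < L} → Fin m}

lemma extFun_up (x : ZMod (2 * L)) (hx : 0 < x.val ∧ x.val < L) :
    extFun j₁ j₂ h x = h ⟨x, hx⟩ := by
  simp only [extFun, dif_pos hx]

lemma extFun_down (x : ZMod (2 * L)) (hx : 0 < (-x).val ∧ (-x).val < L)
    (hx2 : ¬(0 < x.val ∧ x.val < L)) : extFun j₁ j₂ h x = h ⟨-x, hx⟩ := by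
  simp only [extFun, dif_neg hx2, dif_pos hx]

lemma extFun_zero : extFun j₁ j₂ h 0 = j₁ := by
  simp [extFun, ZMod.val_zero]

lemma extFun_L (hL : 1 ≤ L) : extFun j₁ j₂ h (L : ZMod (2 * L)) = j₂ := by
  have hnegL : -(L : ZMod (2 * L)) = L := neg_eq_iff_add_eq_zero.mpr zmL_add_self
  simp only [extFun, hnegL, zmL_val hL, lt_irrefl, and_false, dif_neg, not_false_eq_true,
    if_neg (zmL_ne_zero hL)]

/-- exhaustive case analysis in `ZMod (2L)`. -/
lemma zmod_cases (hL : 1 ≤ L) (x : ZMod (2 * L)) :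
    x = 0 ∨ x = (L : ZMod (2 * L)) ∨ (0 < x.val ∧ x.val < L)
      ∨ ((0 < (-x).val ∧ (-x).val < L) ∧ ¬(0 < x.val ∧ x.val < L)) := by
  have hlt : x.val < 2 * L := ZMod.val_lt x
  rcases Nat.lt_trichotomy x.val L with hv | hv | hv
  · rcases Nat.eq_zero_or_pos x.val with h0 | h0
    · exact Or.inl (ZMod.val_eq_zero x |>.mp h0)
    · exact Or.inr (Or.inr (Or.inl ⟨h0, hv⟩))
  · refine Or.inr (Or.inl ?_)
    apply ZMod.val_injective
    rw [zmL_val hL, hv]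
  · refine Or.inr (Or.inr (Or.inr ?_))
    have hx0 : x ≠ 0 := by
      intro h0
      rw [h0, ZMod.val_zero] at hv
      omega
    have hneg : (-x).val = 2 * L - x.val := by rw [ZMod.neg_val, if_neg hx0]
    constructor
    · rw [hneg]; omega
    · omega

lemma upper_not_lower (x : ZMod (2 * L)) (hx : 0 < x.val ∧ x.val < L) :
    ¬(0 < (-x).val ∧ (-x).val < L) := by
  have hx0 : x ≠ 0 := by
    intro h0
    rw [h0, ZMod.val_zero] at hx
    omega
  have hneg : (-x).val = 2 * L - x.val := by rw [ZMod.neg_val, if_neg hx0]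
  have hlt : x.val < 2 * L := ZMod.val_lt x
  rw [hneg]
  omega

lemma extFun_neg (hL : 1 ≤ L) (x : ZMod (2 * L)) :
    extFun j₁ j₂ h (-x) = extFun j₁ j₂ h x := by
  have hnegL : -(L : ZMod (2 * L)) = L := neg_eq_iff_add_eq_zero.mpr zmL_add_self
  rcases zmod_cases hL x with rfl | rfl | hx | ⟨hx, hx2⟩
  · rw [neg_zero]
  · rw [hnegL]
  · have h1 : ¬(0 < (-x).val ∧ (-x).val < L) := upper_not_lower x hx
    have h2 : 0 < (- -x).val ∧ (- -x).val < L := by rw [neg_neg]; exact hx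
    rw [extFun_down (-x) h2 h1, extFun_up x hx]
    exact congrArg h (Subtype.ext (neg_neg x))
  · rw [extFun_up (-x) hx, extFun_down x hx hx2]

lemma upper_card (F : ZMod (2 * L) → Fin m) (j : Fin m) :
    (univ.filter fun x : ZMod (2 * L) => (0 < x.val ∧ x.val < L) ∧ F x = j).card
      = Nat.card {p : {x : ZMod (2 * L) // 0 < x.val ∧ x.val < L} // F p.1 = j} := by
  classical
  have e : {p : {x : ZMod (2 * L) // 0 < x.val ∧ x.val < L} // F p.1 = j}
      ≃ {x : ZMod (2 * L) // (0 < x.val ∧ x.val < L) ∧ F x = j} :=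
    Equiv.subtypeSubtypeEquivSubtypeInter
      (fun x : ZMod (2 * L) => 0 < x.val ∧ x.val < L) (fun x => F x = j)
  rw [Nat.card_congr e, Nat.card_eq_fintype_card, Fintype.card_subtype]

lemma extFun_isColoring (hL : 1 ≤ L) (hne : j₁ ≠ j₂) (h₁ : Odd (n j₁)) (h₂ : Odd (n j₂))
    (heven : ∀ j, j ≠ j₁ → j ≠ j₂ → Even (n j))
    (hh : ∀ j, Nat.card {x : {x : ZMod (2 * L) // 0 < x.val ∧ x.val < L} // h x = j} = n j / 2) :
    IsColoring (2 * L) m n (extFun j₁ j₂ h) := by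
  intro j
  rw [card_fiber_eq, fiber_partition hL _ (extFun_neg hL), extFun_zero, extFun_L hL,
    upper_card]
  have hcount : Nat.card {p : {x : ZMod (2 * L) // 0 < x.val ∧ x.val < L} //
      extFun j₁ j₂ h p.1 = j} = n j / 2 := by
    rw [← hh j]
    apply Nat.card_congr
    exact Equiv.subtypeEquivRight fun p => by rw [extFun_up p.1 p.2]
  rw [hcount]
  by_cases hj1 : j = j₁
  · subst hj1
    rw [if_pos rfl, if_neg (fun e : j₂ = j => hne e.symm)]
    have := Nat.odd_iff.mp h₁
    omega
  · by_cases hj2 : j = j₂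
    · subst hj2
      rw [if_neg (fun e => hj1 e.symm), if_pos rfl]
      have := Nat.odd_iff.mp h₂
      omega
    · rw [if_neg (fun e => hj1 e.symm), if_neg (fun e => hj2 e.symm)]
      have := Nat.even_iff.mp (heven j hj1 hj2)
      omega

end Extension
section FixCount

variable {m L : ℕ} [NeZero (2 * L)] {n : Fin m → ℕ} {j₁ j₂ : Fin m}

lemma canonical_ext (hL : 1 ≤ L) (hne : j₁ ≠ j₂) (h₁ : Odd (n j₁)) (h₂ : Odd (n j₂))
    (F : ZMod (2 * L) → Fin m)
    (hFc : ∀ j, Nat.card {x : ZMod (2 * L) // F x = j} = n j)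
    (hsym : ∀ x, F (-x) = F x) (hF0 : F 0 = j₁) :
    extFun j₁ j₂ (fun p => F p.1) = F := by
  have hprops := canonical_props hL hne h₁ h₂ F hFc hsym hF0
  funext x
  rcases zmod_cases hL x with rfl | rfl | hx | ⟨hx, hx2⟩
  · rw [extFun_zero, hF0]
  · rw [extFun_L hL, hprops.1]
  · rw [extFun_up x hx]
  · rw [extFun_down x hx hx2]
    exact hsym x

theorem card_fix (hL : 1 ≤ L) (hne : j₁ ≠ j₂) (h₁ : Odd (n j₁)) (h₂ : Odd (n j₂))
    (heven : ∀ j, j ≠ j₁ → j ≠ j₂ → Even (n j)) :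
    Nat.card {q : Quotient (cyclicSetoid (2 * L) m n) // negQ q = q}
      = Nat.card {h : {x : ZMod (2 * L) // 0 < x.val ∧ x.val < L} → Fin m //
          ∀ j, Nat.card {p : {x : ZMod (2 * L) // 0 < x.val ∧ x.val < L} // h p = j}
            = n j / 2} := by
  classical
  have can : ∀ q : {q : Quotient (cyclicSetoid (2 * L) m n) // negQ q = q},
      ∃ f : {f : ZMod (2 * L) → Fin m // IsColoring (2 * L) m n f},
        Quotient.mk (cyclicSetoid (2 * L) m n) f = q.1 ∧ (∀ x, f.1 (-x) = f.1 x)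
          ∧ f.1 0 = j₁ :=
    fun q => canonical_exists hL h₁ q.1 q.2
  refine Nat.card_congr (Equiv.ofBijective
    (fun q => ⟨fun p => (Classical.choose (can q)).1 p.1, ?_⟩) ⟨?_, ?_⟩)
  · intro j
    obtain ⟨hq1, hsym, hf0⟩ := Classical.choose_spec (can q)
    have hprops := canonical_props hL hne h₁ h₂ _ (Classical.choose (can q)).2 hsym hf0
    exact (upper_card _ j).symm.trans (hprops.2 j)
  · intro q q' he
    have hres := congrArg Subtype.val he
    simp only [] at hres
    obtain ⟨hq1, hsym, hf0⟩ := Classical.choose_spec (can q)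
    obtain ⟨hq1', hsym', hf0'⟩ := Classical.choose_spec (can q')
    have e1 := canonical_ext hL hne h₁ h₂ _ (Classical.choose (can q)).2 hsym hf0
    have e2 := canonical_ext hL hne h₁ h₂ _ (Classical.choose (can q')).2 hsym' hf0'
    have hval : (Classical.choose (can q)).1 = (Classical.choose (can q')).1 := by
      rw [← e1, ← e2, hres]
    apply Subtype.ext
    rw [← hq1, ← hq1']
    congr 1
    exact Subtype.ext hval
  · intro h
    set ec : {f : ZMod (2 * L) → Fin m // IsColoring (2 * L) m n f} :=
      ⟨extFun j₁ j₂ h.1, extFun_isColoring hL hne h₁ h₂ heven h.2⟩ with hec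
    have hfix : negQ (Quotient.mk (cyclicSetoid (2 * L) m n) ec)
        = Quotient.mk (cyclicSetoid (2 * L) m n) ec := by
      rw [negQ_mk]
      congr 1
      apply Subtype.ext
      funext x
      exact extFun_neg hL x
    refine ⟨⟨Quotient.mk (cyclicSetoid (2 * L) m n) ec, hfix⟩, ?_⟩
    apply Subtype.ext
    obtain ⟨hq1, hsym, hf0⟩ :=
      Classical.choose_spec (can ⟨Quotient.mk (cyclicSetoid (2 * L) m n) ec, hfix⟩)
    obtain ⟨c, hc⟩ := Quotient.exact hq1
    have huniq := canonical_unique hL h₁ _ (extFun j₁ j₂ h.1)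
      (Classical.choose (can ⟨Quotient.mk (cyclicSetoid (2 * L) m n) ec, hfix⟩)).2
      hsym (extFun_neg hL) hf0 extFun_zero c hc
    funext p
    show (Classical.choose (can ⟨Quotient.mk (cyclicSetoid (2 * L) m n) ec, hfix⟩)).1 p.1
      = h.1 p
    rw [← huniq, extFun_up p.1 p.2]

lemma card_upper_half (hL : 1 ≤ L) :
    Fintype.card {x : ZMod (2 * L) // 0 < x.val ∧ x.val < L} = L - 1 := by
  classical
  rw [Fintype.card_subtype]
  have : (univ.filter fun x : ZMod (2 * L) => 0 < x.val ∧ x.val < L).card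
      = (Finset.Ioo 0 L).card := by
    apply Finset.card_bij (fun x _ => x.val)
    · intro x hx
      simp only [Finset.mem_filter, Finset.mem_univ, true_and] at hx
      rw [Finset.mem_Ioo]
      exact hx
    · intro x hx y hy hxy
      exact ZMod.val_injective _ hxy
    · intro v hv
      rw [Finset.mem_Ioo] at hv
      have hvlt : v < 2 * L := by omega
      refine ⟨(v : ZMod (2 * L)), ?_, ZMod.val_cast_of_lt hvlt⟩
      simp only [Finset.mem_filter, Finset.mem_univ, true_and, ZMod.val_cast_of_lt hvlt]
      exact hv
  rw [this, Nat.card_Ioo]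
  omega

end FixCount
/-- Dihedral necklaces for even `N = 2L` with exactly one pair of odd multiplicities:
`2 γ(D_N, n) = γ(C_N, n) + P(c)` where `c j = n j / 2` (integer division). -/
theorem dihedral_necklace_even_one_odd_pair (m L N : ℕ) (hm : 2 ≤ m) (hL : 1 ≤ L)
    (hN : N = 2 * L) (n : Fin m → ℕ) (hsum : ∑ j, n j = N)
    (j₁ j₂ : Fin m) (hne : j₁ ≠ j₂) (h₁ : Odd (n j₁)) (h₂ : Odd (n j₂))
    (heven : ∀ j, j ≠ j₁ → j ≠ j₂ → Even (n j)) :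
    2 * gammaD N m n =
      gammaC N m n + Nat.multinomial Finset.univ (fun j => n j / 2) := by
  classical
  subst hN
  haveI : NeZero (2 * L) := ⟨by omega⟩
  rw [two_mul_gammaD]
  congr 1
  rw [card_fix hL hne h₁ h₂ heven]
  have hsum2 : ∑ j, n j / 2 = L - 1 := by
    have hind : ∀ j, n j = 2 * (n j / 2) + (if j = j₁ ∨ j = j₂ then 1 else 0) := by
      intro j
      by_cases hj : j = j₁ ∨ j = j₂
      · rw [if_pos hj]
        rcases hj with rfl | rfl
        · have := Nat.odd_iff.mp h₁; omega
        · have := Nat.odd_iff.mp h₂; omega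
      · push_neg at hj
        rw [if_neg (by push_neg; exact hj)]
        have := Nat.even_iff.mp (heven j hj.1 hj.2)
        omega
    have hsplit : ∀ j : Fin m, (if j = j₁ ∨ j = j₂ then (1 : ℕ) else 0)
        = (if j = j₁ then 1 else 0) + (if j = j₂ then 1 else 0) := by
      intro j
      by_cases e1 : j = j₁ <;> by_cases e2 : j = j₂
      · exact absurd (e1.symm.trans e2) hne
      · simp [e1, e2, hne]
      · simp [e1, e2, Ne.symm hne]
      · simp [e1, e2]
    have hs : ∑ j, n j = ∑ j, (2 * (n j / 2) + (if j = j₁ ∨ j = j₂ then 1 else 0)) :=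
      Finset.sum_congr rfl fun j _ => hind j
    rw [hsum, Finset.sum_add_distrib, ← Finset.mul_sum,
      Finset.sum_congr rfl (fun j (_ : j ∈ Finset.univ) => hsplit j),
      Finset.sum_add_distrib, Finset.sum_ite_eq' Finset.univ j₁ (fun _ => (1 : ℕ)),
      Finset.sum_ite_eq' Finset.univ j₂ (fun _ => (1 : ℕ))] at hs
    simp only [Finset.mem_univ, if_pos] at hs
    omega
  exact card_fibers_eq_multinomial (fun j => n j / 2)
    (by rw [card_upper_half hL]; exact hsum2)
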